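/- The polynomial f = (x² + y)(x² − y)³ ∈ ℂ[x,y] has the property that its zero set is invariant under the action of μ₂ = {±1} on ℂ² given by (−1)·(x,y) = (−x,−y), but there is no integer k ≥ 1 such that f^k is invariant under this action (i.e. f(−x,−y)^k = f(x,y)^k for all (x,y) fails for every k ≥ 1). -/

import Mathlib

/-- the zero set of `f = (x²+y)(x²−y)³` is invariant under
`(x,y) ↦ (−x,−y)`, but no power `f^k` (`k ≥ 1`) is invariant under this action. -/
theorem stmt_15 :
    let f : ℂ → ℂ → ℂ := fun x y => (x ^ 2 + y) * (x ^ 2 - y) ^ 3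
    (∀ x y : ℂ, f x y = 0 → f (-x) (-y) = 0) ∧
    (∀ k : ℕ, 1 ≤ k → ¬ ∀ x y : ℂ, f (-x) (-y) ^ k = f x y ^ k) := by
  intro f
  constructor
  · intro x y h
    have h' : (x ^ 2 + y) * (x ^ 2 - y) ^ 3 = 0 := h
    have hcases : x ^ 2 + y = 0 ∨ x ^ 2 - y = 0 := by
      rcases mul_eq_zero.mp h' with h1 | h2
      · exact Or.inl h1
      · exact Or.inr (pow_eq_zero_iff (three_ne_zero) |>.mp h2)
    show ((-x) ^ 2 + -y) * ((-x) ^ 2 - -y) ^ 3 = 0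
    rcases hcases with h1 | h2
    · have : (-x) ^ 2 - -y = 0 := by rw [show (-x) ^ 2 - -y = x ^ 2 + y by ring, h1]
      rw [this]; ring
    · have : (-x) ^ 2 + -y = 0 := by rw [show (-x) ^ 2 + -y = x ^ 2 - y by ring, h2]
      rw [this]; ring
  · intro k hk h
    have key := h 1 (1/3)
    have h1 : f (-1) (-(1/3)) = 128 / 81 := by
      show ((-1 : ℂ) ^ 2 + -(1/3)) * ((-1) ^ 2 - -(1/3)) ^ 3 = 128 / 81
      norm_num
    have h2 : f 1 (1/3) = 32 / 81 := by
      show ((1 : ℂ) ^ 2 + 1/3) * (1 ^ 2 - 1/3) ^ 3 = 32 / 81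
      norm_num
    rw [h1, h2] at key
    have habs : ((128 : ℝ) / 81) ^ k = ((32 : ℝ) / 81) ^ k := by
      have := congrArg (‖·‖) key
      simpa [norm_pow] using this
    have hlt : ((32 : ℝ) / 81) ^ k < ((128 : ℝ) / 81) ^ k := by
      apply pow_lt_pow_left₀ (by norm_num) (by norm_num)
      omega
    linarith
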